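/- The double sum ∑_{k=1}^{d+e−2} ∑_{i=0}^{k+1} (−1)^k (k+1−i) · C(d−1, k+1−i) · z^{k+1−i} · C(e,i) · z^{ei} equals (d−1) z [ (1−z)^{d−2} (1−z^e)^e − 1 ], as polynomials in z. -/

import Mathlib

open Polynomial Finset

lemma one_sub_pow_expand (y : ℤ[X]) (n : ℕ) :
    (1 - y) ^ n = ∑ j ∈ range (n + 1), C ((-1) ^ j * (n.choose j : ℤ)) * y ^ j := by
  rw [sub_eq_add_neg, add_comm, add_pow]
  refine Finset.sum_congr rfl fun j hj => ?_
  simp only [map_mul, map_pow, map_neg, map_one, Polynomial.C_eq_natCast]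
  rw [neg_pow]
  ring

lemma U_sum (e : ℕ) :
    ∑ i ∈ range (e + 1), C ((-1) ^ i * ((e.choose i : ℕ) : ℤ)) * X ^ (e * i) =
      ((1 : ℤ[X]) - X ^ e) ^ e := by
  rw [one_sub_pow_expand]
  exact Finset.sum_congr rfl fun i _ => by rw [← pow_mul]

lemma T_sum (d : ℕ) (hd : 2 ≤ d) :
    ∑ j ∈ range d, C ((-1) ^ j * (j : ℤ) * ((d - 1).choose j : ℤ)) * X ^ j =
      -(C (((d - 1 : ℕ) : ℤ)) * X * ((1 : ℤ[X]) - X) ^ (d - 2)) := by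
  obtain ⟨m, rfl⟩ : ∃ m, d = m + 2 := ⟨d - 2, by omega⟩
  rw [Finset.sum_range_succ']
  simp only [Nat.cast_zero, mul_zero, zero_mul, map_zero, pow_zero, mul_one, add_zero]
  have key : ∀ j : ℕ, ((j : ℤ) + 1) * ((m + 1).choose (j + 1) : ℤ)
      = ((m : ℤ) + 1) * (m.choose j : ℤ) := by
    intro j
    have h := Nat.add_one_mul_choose_eq m j
    have h' : (m + 1) * m.choose j = (m + 1).choose (j + 1) * (j + 1) := by
      simpa [Nat.succ_eq_add_one] using h
    have := congrArg (fun n : ℕ => (n : ℤ)) h'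
    push_cast at this
    linarith
  have step : ∀ j : ℕ, C ((-1) ^ (j + 1) * ((j + 1 : ℕ) : ℤ) * (((m + 2) - 1).choose (j + 1) : ℤ))
        * X ^ (j + 1)
      = -(C (((m + 1 : ℕ)) : ℤ) * X * (C ((-1) ^ j * (m.choose j : ℤ)) * X ^ j)) := by
    intro j
    have h2 : (m : ℕ) + 2 - 1 = m + 1 := by omega
    rw [h2]
    have h3 : ((-1:ℤ)) ^ (j + 1) * ((j + 1 : ℕ) : ℤ) * ((m + 1).choose (j + 1) : ℤ)
        = -((((m+1:ℕ)):ℤ) * ((-1) ^ j * (m.choose j : ℤ))) := by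
      push_cast
      linear_combination (-(-1:ℤ)^j) * key j
    rw [h3, map_neg, pow_succ]
    simp only [map_mul, map_pow, map_neg, map_one, Polynomial.C_eq_natCast]
    push_cast
    ring
  rw [Finset.sum_congr rfl fun j _ => step j]
  rw [Finset.sum_neg_distrib, ← Finset.mul_sum, ← one_sub_pow_expand]
  norm_num

noncomputable def gg (d e j i : ℕ) : ℤ[X] :=
  C ((-1) ^ (j + i) * (j : ℤ) * ((d - 1).choose j : ℤ) * ((e.choose i : ℕ) : ℤ)) *
    X ^ j * X ^ (e * i)

lemma gg_zero_left (d e i : ℕ) : gg d e 0 i = 0 := by simp [gg]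

lemma gg_big_left {d e j i : ℕ} (hd : 1 ≤ d) (h : d ≤ j) : gg d e j i = 0 := by
  have : (d - 1).choose j = 0 := Nat.choose_eq_zero_of_lt (by omega)
  simp [gg, this]

lemma gg_big_right {d e j i : ℕ} (h : e + 1 ≤ i) : gg d e j i = 0 := by
  have : e.choose i = 0 := Nat.choose_eq_zero_of_lt (by omega)
  simp [gg, this]

lemma fiber_eq (d e : ℕ) (hd : 1 ≤ d) (s : ℕ) :
    ∑ p ∈ (range d ×ˢ range (e + 1)).filter (fun p => p.1 + p.2 = s), gg d e p.1 p.2 =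
      ∑ i ∈ range (s + 1), gg d e (s - i) i := by
  have hsub : (range d ×ˢ range (e + 1)).filter (fun p => p.1 + p.2 = s)
      ⊆ Finset.HasAntidiagonal.antidiagonal s := by
    intro p hp
    rw [Finset.mem_filter] at hp
    rw [Finset.HasAntidiagonal.mem_antidiagonal]
    exact hp.2
  rw [Finset.sum_subset hsub ?zero]
  case zero =>
    intro p hp hnp
    rw [Finset.HasAntidiagonal.mem_antidiagonal] at hp
    rw [Finset.mem_filter, Finset.mem_product, Finset.mem_range, Finset.mem_range] at hnp
    by_cases h1 : p.1 < d
    · by_cases h2 : p.2 < e + 1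
      · exact absurd ⟨⟨h1, h2⟩, hp⟩ hnp
      · exact gg_big_right (by omega)
    · exact gg_big_left hd (by omega)
  rw [← Finset.Nat.sum_antidiagonal_swap]
  simp only [Prod.fst_swap, Prod.snd_swap]
  rw [Finset.Nat.sum_antidiagonal_eq_sum_range_succ (fun a b => gg d e b a)]

noncomputable def AA (d e s : ℕ) : ℤ[X] := ∑ i ∈ range (s + 1), gg d e (s - i) i

theorem stmt3 (d e : ℕ) (hd : 2 ≤ d) (he : 1 ≤ e) :
    (∑ k ∈ Finset.Icc 1 (d + e - 2), ∑ i ∈ Finset.range (k + 2),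
        C ((-1) ^ k * ((k + 1 - i : ℕ) : ℤ) * (((d - 1).choose (k + 1 - i) : ℕ) : ℤ) *
            ((e.choose i : ℕ) : ℤ)) * X ^ (k + 1 - i) * X ^ (e * i)) =
      C (((d - 1 : ℕ) : ℤ)) * X * ((1 - X) ^ (d - 2) * (1 - X ^ e) ^ e - 1) := by
  -- Step 1: rewrite the LHS as -∑ AA (k+1)
  have step1 : (∑ k ∈ Finset.Icc 1 (d + e - 2), ∑ i ∈ Finset.range (k + 2),
        C ((-1) ^ k * ((k + 1 - i : ℕ) : ℤ) * (((d - 1).choose (k + 1 - i) : ℕ) : ℤ) *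
            ((e.choose i : ℕ) : ℤ)) * X ^ (k + 1 - i) * X ^ (e * i))
      = -∑ k ∈ Finset.Icc 1 (d + e - 2), AA d e (k + 1) := by
    rw [← Finset.sum_neg_distrib]
    refine Finset.sum_congr rfl fun k _ => ?_
    rw [AA, ← Finset.sum_neg_distrib]
    refine Finset.sum_congr rfl fun i hi => ?_
    rw [Finset.mem_range] at hi
    have hji : k + 1 - i + i = k + 1 := by omega
    have hsign : ((-1 : ℤ)) ^ (k + 1 - i + i) * ((k + 1 - i : ℕ) : ℤ)
          * (((d - 1).choose (k + 1 - i)) : ℤ) * ((e.choose i : ℕ) : ℤ)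
        = -(((-1 : ℤ)) ^ k * ((k + 1 - i : ℕ) : ℤ)
          * (((d - 1).choose (k + 1 - i)) : ℤ) * ((e.choose i : ℕ) : ℤ)) := by
      rw [hji, pow_succ]
      ring
    rw [gg, hsign, map_neg]
    ring
  -- Step 2: extend the Icc sum to range (d+e)
  have step2 : ∑ s ∈ range (d + e), AA d e s
      = (∑ k ∈ Finset.Icc 1 (d + e - 2), AA d e (k + 1)) + AA d e 1 + AA d e 0 := by
    obtain ⟨K, hKe⟩ : ∃ K, d + e = K + 2 := ⟨d + e - 2, by omega⟩
    have hK2 : d + e - 2 = K := by omega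
    rw [hK2, hKe, Finset.sum_range_succ', Finset.sum_range_succ']
    congr 1
    congr 1
    rw [← Finset.Ico_add_one_right_eq_Icc, Finset.sum_Ico_eq_sum_range]
    refine Finset.sum_congr (by norm_num) fun i _ => ?_
    congr 1
    omega
  -- small values of AA
  have hA0 : AA d e 0 = 0 := by
    rw [AA]
    simp [gg_zero_left]
  have hA1 : AA d e 1 = gg d e 1 0 := by
    rw [AA, Finset.sum_range_succ, Finset.sum_range_succ, Finset.sum_range_zero]
    simp [gg_zero_left]
  -- Step 3: total AA sum is a rectangle sum
  have step3 : ∑ s ∈ range (d + e), AA d e s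
      = ∑ p ∈ (range d ×ˢ range (e + 1)), gg d e p.1 p.2 := by
    rw [← Finset.sum_fiberwise_of_maps_to (g := fun p : ℕ × ℕ => p.1 + p.2)
      (t := range (d + e)) ?maps]
    case maps =>
      intro p hp
      rw [Finset.mem_product, Finset.mem_range, Finset.mem_range] at hp
      simp only [Finset.mem_range]
      omega
    refine Finset.sum_congr rfl fun s _ => ?_
    rw [AA]
    exact (fiber_eq d e (by omega) s).symm
  -- Step 4: rectangle sum as a product
  have step4 : ∑ p ∈ (range d ×ˢ range (e + 1)), gg d e p.1 p.2
      = (∑ j ∈ range d, C ((-1) ^ j * (j : ℤ) * ((d - 1).choose j : ℤ)) * X ^ j)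
        * (∑ i ∈ range (e + 1), C ((-1) ^ i * ((e.choose i : ℕ) : ℤ)) * X ^ (e * i)) := by
    rw [Finset.sum_mul_sum, Finset.sum_product]
    refine Finset.sum_congr rfl fun j _ => Finset.sum_congr rfl fun i _ => ?_
    rw [gg, pow_add]
    simp only [map_mul, map_pow, map_neg, map_one, Polynomial.C_eq_natCast]
    ring
  have hgg10 : gg d e 1 0 = -(C (((d - 1 : ℕ) : ℤ)) * X) := by
    have hc : ((-1:ℤ))^(1+0) * ((1:ℕ):ℤ) * (((d-1).choose 1 : ℕ):ℤ) * ((e.choose 0 : ℕ):ℤ)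
        = -(((d-1:ℕ)):ℤ) := by
      simp [Nat.choose_one_right]
    rw [gg, hc, map_neg]
    ring
  have key : ∑ k ∈ Finset.Icc 1 (d + e - 2), AA d e (k + 1)
      = -(C (((d - 1 : ℕ) : ℤ)) * X * ((1 : ℤ[X]) - X) ^ (d - 2)) * ((1 : ℤ[X]) - X ^ e) ^ e
        - gg d e 1 0 := by
    rw [← T_sum d hd, ← U_sum e, ← step4, ← step3, step2, hA0, hA1]
    ring
  rw [step1, key, hgg10]
  ring
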